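/- If a state has only the three nonzero coefficients corresponding to charges p¹, p², q₀ (i.e., c₁ = −p¹, c₂ = −p², c₇ = q₀, others zero) with p¹p²q₀ ≠ 0, then its Cayley hyperdeterminant D₃ vanishes, but none of the three pairs of conditions (c₀c₃ = c₁c₂ and c₅c₆ = c₄c₇), (c₁c₄ = c₀c₅ and c₃c₆ = c₂c₇), (c₃c₅ = c₁c₇ and c₂c₄ = c₀c₆) hold simultaneously. -/
import Mathlib

theorem stmt_3 (p1 p2 q0 : ℝ) (hne : p1 * p2 * q0 ≠ 0)
    (c0 c1 c2 c3 c4 c5 c6 c7 : ℝ)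
    (h0 : c0 = 0) (h1 : c1 = -p1) (h2 : c2 = -p2) (h3 : c3 = 0)
    (h4 : c4 = 0) (h5 : c5 = 0) (h6 : c6 = 0) (h7 : c7 = q0) :
    (c0*c7 - c1*c6 - c2*c5 + c3*c4)^2 - 4*(c0*c3 - c1*c2)*(c4*c7 - c5*c6) = 0
    ∧ ¬ (c0*c3 = c1*c2 ∧ c5*c6 = c4*c7)
    ∧ ¬ (c1*c4 = c0*c5 ∧ c3*c6 = c2*c7)
    ∧ ¬ (c3*c5 = c1*c7 ∧ c2*c4 = c0*c6) := by
  subst h0 h1 h2 h3 h4 h5 h6 h7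
  have hp1 : p1 ≠ 0 := fun h => hne (by simp [h])
  have hp2 : p2 ≠ 0 := fun h => hne (by simp [h])
  have hq0 : c7 ≠ 0 := fun h => hne (by simp [h])
  refine ⟨by ring, fun ⟨h, _⟩ => ?_, fun ⟨_, h⟩ => ?_, fun ⟨h, _⟩ => ?_⟩
  · exact mul_ne_zero (neg_ne_zero.2 hp1) (neg_ne_zero.2 hp2) (by linarith)
  · exact mul_ne_zero (neg_ne_zero.2 hp2) hq0 (by linarith)
  · exact mul_ne_zero (neg_ne_zero.2 hp1) hq0 (by nlinarith [h])
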